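/- If an infinite word u is not c-balanced for any c > 0, then its abelian complexity function AC_u is unbounded. -/

import Mathlib

/-- The factor of the infinite word `u` of length `n` starting at position `j`. -/
def factorAt {m : ℕ} (u : ℕ → Fin m) (j n : ℕ) : List (Fin m) :=
  List.ofFn fun i : Fin n => u (j + i)

/-- The relative Parikh vector of the factor of `u` of length `n` starting at `j`:
the Parikh vector of the factor minus the Parikh vector of the prefix of length `n`. -/
def relParikh {m : ℕ} (u : ℕ → Fin m) (n j : ℕ) : Fin m → ℤ :=
  fun a => ((factorAt u j n).count a : ℤ) - ((factorAt u 0 n).count a : ℤ)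

/-- `u` is `c`-balanced. -/
def IsBalanced {m : ℕ} (u : ℕ → Fin m) (c : ℕ) : Prop :=
  ∀ a : Fin m, ∀ n j k : ℕ,
    |((factorAt u j n).count a : ℤ) - ((factorAt u k n).count a : ℤ)| ≤ (c : ℤ)

/-- `φ` is a Parry substitution (simple or non-simple) with exponents `α`. -/
def IsParry {m : ℕ} (hm : 0 < m) (α : Fin m → ℕ) (φ : Fin m → List (Fin m)) : Prop :=
  1 ≤ α ⟨0, hm⟩ ∧ (∀ ℓ : Fin m, α ℓ ≤ α ⟨0, hm⟩) ∧
  (∀ i : Fin m, ∀ hi : i.val + 1 < m,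
      φ i = List.replicate (α i) ⟨0, hm⟩ ++ [⟨i.val + 1, hi⟩]) ∧
  (∀ i : Fin m, i.val + 1 = m →
    (1 ≤ α i ∧ φ i = List.replicate (α i) ⟨0, hm⟩) ∨
    (∃ p : Fin m, φ i = List.replicate (α i) ⟨0, hm⟩ ++ [p] ∧
      ∃ ℓ : Fin m, p ≤ ℓ ∧ 1 ≤ α ℓ))

/-- `φ` is a simple Parry substitution with exponents `α`. -/
def IsSimpleParry {m : ℕ} (hm : 0 < m) (α : Fin m → ℕ) (φ : Fin m → List (Fin m)) : Prop :=
  1 ≤ α ⟨0, hm⟩ ∧ (∀ ℓ : Fin m, α ℓ ≤ α ⟨0, hm⟩) ∧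
  (∀ i : Fin m, i.val + 1 = m → 1 ≤ α i) ∧
  (∀ i : Fin m, ∀ hi : i.val + 1 < m,
      φ i = List.replicate (α i) ⟨0, hm⟩ ++ [⟨i.val + 1, hi⟩]) ∧
  (∀ i : Fin m, i.val + 1 = m → φ i = List.replicate (α i) ⟨0, hm⟩)

/-- `u` is the fixed point of `φ` starting with the letter `0`:
every iterate `φ^k(0)` is a prefix of `u`. -/
def IsFixedPoint {m : ℕ} (hm : 0 < m) (φ : Fin m → List (Fin m)) (u : ℕ → Fin m) : Prop :=
  ∀ k i : ℕ, ∀ h : i < ((fun v => v.flatMap φ)^[k] [(⟨0, hm⟩ : Fin m)]).length,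
    ((fun v => v.flatMap φ)^[k] [(⟨0, hm⟩ : Fin m)])[i] = u i

/-- `U_j = |φ^j(0)|`. -/
def Uval {m : ℕ} (hm : 0 < m) (φ : Fin m → List (Fin m)) (j : ℕ) : ℕ :=
  ((fun v => v.flatMap φ)^[j] [(⟨0, hm⟩ : Fin m)]).length

theorem factorAt_step {m : ℕ} (u : ℕ → Fin m) (a : Fin m) (n t : ℕ) :
    |((factorAt u (t+1) n).count a : ℤ) - ((factorAt u t n).count a : ℤ)| ≤ 1 := by
  have h1 : factorAt u t (n+1) = u t :: factorAt u (t+1) n := by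
    have e : (fun i : Fin n => u (t + 1 + ↑i)) = fun i : Fin n => u (t + ↑i.succ) := by
      funext i
      congr 1
      simp only [Fin.val_succ]
      omega
    simp [factorAt, List.ofFn_succ, e]
  have h2 : factorAt u t (n+1) = factorAt u t n ++ [u (t+n)] := by
    simp only [factorAt, List.ofFn_succ']
    simp [List.concat_eq_append]
  have h3 : (u t :: factorAt u (t+1) n).count a
      = (factorAt u t n ++ [u (t+n)]).count a := by rw [← h1, ← h2]
  simp only [List.count_cons, List.count_append, List.count_nil] at h3
  rw [abs_le]
  split_ifs at h3 <;> constructor <;> omega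

theorem discrete_ivt (f : ℕ → ℤ) (hf : ∀ t, |f (t+1) - f t| ≤ 1) :
    ∀ k j : ℕ, j ≤ k → ∀ v : ℤ, f j ≤ v → v ≤ f k → ∃ t, f t = v := by
  intro k
  induction k with
  | zero =>
    intro j hj v h1 h2
    interval_cases j
    exact ⟨0, le_antisymm h1 h2⟩
  | succ k ih =>
    intro j hj v h1 h2
    rcases Nat.lt_or_ge j (k+1) with hj' | hj'
    · rcases le_or_gt v (f k) with hv | hv
      · exact ih j (Nat.lt_succ_iff.mp hj') v h1 hv
      · have := hf k
        rw [abs_le] at this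
        exact ⟨k+1, le_antisymm (by omega) h2⟩
    · have hje : j = k + 1 := le_antisymm hj hj'
      exact ⟨j, le_antisymm h1 (hje ▸ h2)⟩

theorem discrete_ivt' (f : ℕ → ℤ) (hf : ∀ t, |f (t+1) - f t| ≤ 1)
    (j k : ℕ) (v : ℤ) (h1 : f j ≤ v) (h2 : v ≤ f k) : ∃ t, f t = v := by
  rcases Nat.le_total j k with hjk | hjk
  · exact discrete_ivt f hf k j hjk v h1 h2
  · have hf' : ∀ t, |(-f) (t+1) - (-f) t| ≤ 1 := by
      intro t
      have := hf t
      rw [abs_le] at this ⊢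
      simp only [Pi.neg_apply]
      omega
    obtain ⟨t, ht⟩ := discrete_ivt (-f) hf' j k hjk (-v) (by simpa) (by simpa)
    exact ⟨t, by simpa using ht⟩

/-- If an infinite word `u` is not `c`-balanced for any `c > 0`, then its
abelian complexity function (the number of distinct Parikh vectors of length-`n` factors)
is unbounded. -/
theorem abelianComplexity_unbounded_of_unbalanced (m : ℕ) (u : ℕ → Fin m)
    (h : ¬ ∃ c : ℕ, 0 < c ∧ IsBalanced u c) :
    ∀ B : ℕ, ∃ n : ℕ,
      B < {ψ : Fin m → ℕ | ∃ j : ℕ, ψ = fun a => (factorAt u j n).count a}.ncard := by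
  intro B
  push_neg at h
  have hb := h (B+1) (Nat.succ_pos B)
  rw [IsBalanced] at hb
  push_neg at hb
  obtain ⟨a, n, j, k, hjk⟩ := hb
  refine ⟨n, ?_⟩
  set S := {ψ : Fin m → ℕ | ∃ j : ℕ, ψ = fun a => (factorAt u j n).count a} with hS
  have hfin : S.Finite := by
    apply Set.Finite.subset (Set.finite_Icc (fun _ : Fin m => 0) (fun _ : Fin m => n))
    rintro ψ ⟨t, rfl⟩
    constructor
    · intro b; exact Nat.zero_le _
    · intro b
      calc (factorAt u t n).count b ≤ (factorAt u t n).length := List.count_le_length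
        _ = n := by simp [factorAt]
  set f : ℕ → ℤ := fun t => ((factorAt u t n).count a : ℤ) with hf
  have hstep : ∀ t, |f (t+1) - f t| ≤ 1 := fun t => factorAt_step u a n t
  set lo := min (f j) (f k) with hlo
  set hi := max (f j) (f k) with hhi
  have key : ∀ v ∈ Set.Icc lo hi, ∃ t, f t = v := by
    rintro v ⟨h1, h2⟩
    rcases le_total (f j) (f k) with hc | hc
    · rw [hlo, min_eq_left hc] at h1
      rw [hhi, max_eq_right hc] at h2
      exact discrete_ivt' f hstep j k v h1 h2
    · rw [hlo, min_eq_right hc] at h1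
      rw [hhi, max_eq_left hc] at h2
      exact discrete_ivt' f hstep k j v h1 h2
  set P : (Fin m → ℕ) → ℤ := fun ψ => (ψ a : ℤ) with hP
  have hsub : Set.Icc lo hi ⊆ P '' S := by
    intro v hv
    obtain ⟨t, ht⟩ := key v hv
    exact ⟨fun b => (factorAt u t n).count b, ⟨t, rfl⟩, ht⟩
  have h1 : (Set.Icc lo hi).ncard ≤ (P '' S).ncard :=
    Set.ncard_le_ncard hsub (hfin.image P)
  have h2 : (P '' S).ncard ≤ S.ncard := Set.ncard_image_le hfin
  have h3 : (Set.Icc lo hi).ncard = (hi + 1 - lo).toNat := by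
    rw [← Finset.coe_Icc, Set.ncard_coe_finset, Int.card_Icc]
  have habs : hi - lo = |f j - f k| := by
    rcases le_total (f j) (f k) with hc | hc
    · rw [hlo, hhi, min_eq_left hc, max_eq_right hc, abs_sub_comm, abs_of_nonneg (by omega)]
    · rw [hlo, hhi, min_eq_right hc, max_eq_left hc, abs_of_nonneg (by omega)]
  have h4 : ((B + 1 : ℕ) : ℤ) < hi - lo := by rw [habs]; exact hjk
  omega
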